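/- arXiv:1812.11511 — 2 statements merged into one kernel-verified Lean document; each statement's English description precedes it below -/
import Mathlib

section
/- Let A be a residuated lattice, F a filter of A, and P a prime filter of A with F ⊆ P. Then D_F(P) = {a ∈ A | x ∨ a ∈ F for some x ∉ P} is a filter of A and D_F(P) ⊆ P. -/
class ResiduatedLattice (α : Type*) extends Lattice α, CommMonoid α, BoundedOrder α where
  rimp : α → α → α
  one_eq_top : (1 : α) = ⊤
  adjunction : ∀ x y z : α, x * y ≤ z ↔ x ≤ rimp y z

variable {α : Type*} [ResiduatedLattice α]

/-- A filter of a residuated lattice: nonempty, closed under `⊙` and upward closed. -/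
def IsFilter (F : Set α) : Prop :=
  F.Nonempty ∧ (∀ x ∈ F, ∀ y ∈ F, x * y ∈ F) ∧ ∀ x ∈ F, ∀ y : α, x ≤ y → y ∈ F

/-- A prime filter: a proper filter such that `x ⊔ y ∈ P` implies `x ∈ P` or `y ∈ P`. -/
def IsPrimeFilter (P : Set α) : Prop :=
  IsFilter P ∧ P ≠ Set.univ ∧ ∀ x y : α, x ⊔ y ∈ P → x ∈ P ∨ y ∈ P

/-- A `∨`-closed subset: nonempty and closed under join. -/
def IsJoinClosed (C : Set α) : Prop :=
  C.Nonempty ∧ ∀ x ∈ C, ∀ y ∈ C, x ⊔ y ∈ C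

/-- The filter generated by a set. -/
def filterGen (X : Set α) : Set α := ⋂₀ {G : Set α | IsFilter G ∧ X ⊆ G}

/-- An `X`-minimal prime filter: prime, contains `X`, minimal among primes containing `X`. -/
def IsMinPrimeOver (X P : Set α) : Prop :=
  IsPrimeFilter P ∧ X ⊆ P ∧ ∀ Q : Set α, IsPrimeFilter Q → X ⊆ Q → Q ⊆ P → Q = P

/-- `ω_F(X) = {a | x ∨ a ∈ F for some x ∈ X}`. -/
def omegaF (F X : Set α) : Set α := {a : α | ∃ x ∈ X, x ⊔ a ∈ F}

/-- The coannihilator `(F : x) = {a | x ∨ a ∈ F}`. -/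
def coann (F : Set α) (x : α) : Set α := {a : α | x ⊔ a ∈ F}

/-- `D_F(H) = {a | x ∨ a ∈ F for some x ∉ H}`, the set of `F`-divisors of `H`. -/
def divisorsF (F H : Set α) : Set α := {a : α | ∃ x ∉ H, x ⊔ a ∈ F}

/-- A lattice ideal: nonempty, closed under join and downward closed. -/
def IsLatticeIdeal (I : Set α) : Prop :=
  I.Nonempty ∧ (∀ x ∈ I, ∀ y ∈ I, x ⊔ y ∈ I) ∧ ∀ x y : α, x ≤ y → y ∈ I → x ∈ I

/-- The lattice ideal generated by a set. -/
def idealGen (X : Set α) : Set α := ⋂₀ {I : Set α | IsLatticeIdeal I ∧ X ⊆ I}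

/-- An `ω_F`-filter: a filter of the form `ω_F(I)` for some lattice ideal `I`. -/
def IsOmegaFilter (F H : Set α) : Prop :=
  IsFilter H ∧ ∃ I : Set α, IsLatticeIdeal I ∧ H = omegaF F I

lemma rl_mul_le_mul_left {x y : α} (z : α) (h : x ≤ y) : z * x ≤ z * y := by
  have h1 : y ≤ ResiduatedLattice.rimp z (z * y) :=
    (ResiduatedLattice.adjunction y z (z * y)).mp (le_of_eq (mul_comm y z))
  have h2 : x * z ≤ z * y := (ResiduatedLattice.adjunction x z (z * y)).mpr (le_trans h h1)
  calc z * x = x * z := mul_comm z x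
    _ ≤ z * y := h2

lemma rl_mul_le_left (x y : α) : x * y ≤ x := by
  have : y ≤ (1 : α) := ResiduatedLattice.one_eq_top (α := α) ▸ le_top
  calc x * y ≤ x * 1 := rl_mul_le_mul_left x this
    _ = x := mul_one x

lemma rl_mul_le_right (x y : α) : x * y ≤ y := mul_comm x y ▸ rl_mul_le_left y x

/-- Proposition 3.12: for a prime filter `P ⊇ F`, `D_F(P)` is a filter
contained in `P`. -/
theorem stmt_7 (F P : Set α) (hF : IsFilter F) (hP : IsPrimeFilter P) (hFP : F ⊆ P) :
    IsFilter (divisorsF F P) ∧ divisorsF F P ⊆ P := by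
  constructor
  · refine ⟨?_, ?_, ?_⟩
    · -- nonempty: 1 ∈ D
      obtain ⟨f, hf⟩ := hF.1
      obtain ⟨x, hx⟩ : ∃ x, x ∉ P := by
        by_contra h
        push_neg at h
        exact hP.2.1 (Set.eq_univ_of_forall h)
      refine ⟨1, x, hx, ?_⟩
      have h1 : f ≤ x ⊔ 1 := by
        rw [ResiduatedLattice.one_eq_top (α := α)]
        simp
      exact hF.2.2 f hf _ h1
    · rintro a ⟨x, hx, hxa⟩ b ⟨y, hy, hyb⟩
      have hmem : (x ⊔ a) * (y ⊔ b) ∈ F := hF.2.1 _ hxa _ hyb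
      have hle : (x ⊔ a) * (y ⊔ b) ≤ (x ⊔ y) ⊔ a * b := by
        have hx1 : (x ⊔ a) * y ≤ (x ⊔ y) ⊔ a * b :=
          le_trans (rl_mul_le_right _ _) (le_trans le_sup_right le_sup_left)
        have hx2 : (x ⊔ a) * b ≤ (x ⊔ y) ⊔ a * b := by
          have hxb : x * b ≤ (x ⊔ y) ⊔ a * b :=
            le_trans (rl_mul_le_left _ _) (le_trans le_sup_left le_sup_left)
          have hab : a * b ≤ (x ⊔ y) ⊔ a * b := le_sup_right
          have : x ⊔ a ≤ ResiduatedLattice.rimp b ((x ⊔ y) ⊔ a * b) :=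
            sup_le ((ResiduatedLattice.adjunction _ _ _).mp hxb)
              ((ResiduatedLattice.adjunction _ _ _).mp hab)
          exact (ResiduatedLattice.adjunction _ _ _).mpr this
        have : y ⊔ b ≤ ResiduatedLattice.rimp (x ⊔ a) ((x ⊔ y) ⊔ a * b) :=
          sup_le ((ResiduatedLattice.adjunction _ _ _).mp (mul_comm y (x ⊔ a) ▸ hx1))
            ((ResiduatedLattice.adjunction _ _ _).mp (mul_comm b (x ⊔ a) ▸ hx2))
        have := (ResiduatedLattice.adjunction _ _ _).mpr this
        calc (x ⊔ a) * (y ⊔ b) = (y ⊔ b) * (x ⊔ a) := mul_comm _ _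
          _ ≤ (x ⊔ y) ⊔ a * b := this
      have hxy : x ⊔ y ∉ P := by
        intro h
        rcases hP.2.2 x y h with h' | h'
        · exact hx h'
        · exact hy h'
      exact ⟨x ⊔ y, hxy, hF.2.2 _ hmem _ hle⟩
    · rintro a ⟨x, hx, hxa⟩ b hab
      exact ⟨x, hx, hF.2.2 _ hxa _ (sup_le_sup_left hab x)⟩
  · rintro a ⟨x, hx, hxa⟩
    rcases hP.2.2 x a (hFP hxa) with h | h
    · exact absurd h hx
    · exact h
end

section
/- Let A be a residuated lattice, F a proper filter of A, and m an F-minimal prime filter of A. Then m = D_F(m) and m ⊆ D_F(F). -/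
variable {α : Type*} [ResiduatedLattice α]

section Helpers

open ResiduatedLattice

lemma rl_le_one (a : α) : a ≤ (1 : α) := by
  rw [ResiduatedLattice.one_eq_top]; exact le_top

lemma rl_mul_le_right_s8 {a b : α} (h : a ≤ b) (c : α) : a * c ≤ b * c := by
  have hb : b ≤ rimp c (b * c) := (adjunction b c (b * c)).mp le_rfl
  exact (adjunction a c (b * c)).mpr (h.trans hb)

lemma rl_mul_le_mul {a b c d : α} (h1 : a ≤ b) (h2 : c ≤ d) : a * c ≤ b * d := by
  calc a * c ≤ b * c := rl_mul_le_right_s8 h1 c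
    _ = c * b := mul_comm _ _
    _ ≤ d * b := rl_mul_le_right_s8 h2 b
    _ = b * d := mul_comm _ _

lemma rl_mul_le_left_s8 (a b : α) : a * b ≤ b := by
  calc a * b ≤ 1 * b := rl_mul_le_right_s8 (rl_le_one a) b
    _ = b := one_mul b

lemma rl_mul_sup_le (a b c : α) : a * (b ⊔ c) ≤ a * b ⊔ a * c := by
  rw [mul_comm]
  refine (adjunction _ _ _).mpr (sup_le ?_ ?_)
  · exact (adjunction _ _ _).mp (by rw [mul_comm]; exact le_sup_left)
  · exact (adjunction _ _ _).mp (by rw [mul_comm]; exact le_sup_right)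

lemma rl_pow_sup (x y : α) : ∀ m n : ℕ, (x ⊔ y) ^ (m + n) ≤ x ^ m ⊔ y ^ n := by
  intro m
  induction m with
  | zero =>
    intro n
    have h : (x : α) ^ 0 = ⊤ := by rw [pow_zero, ResiduatedLattice.one_eq_top]
    calc (x ⊔ y) ^ (0 + n) ≤ ⊤ := by rw [← ResiduatedLattice.one_eq_top]; exact rl_le_one _
      _ ≤ x ^ 0 ⊔ y ^ n := by rw [h]; exact le_sup_left
  | succ m ih =>
    intro n
    induction n with
    | zero =>
      have h : (y : α) ^ 0 = ⊤ := by rw [pow_zero, ResiduatedLattice.one_eq_top]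
      calc (x ⊔ y) ^ (m + 1 + 0) ≤ ⊤ := by rw [← ResiduatedLattice.one_eq_top]; exact rl_le_one _
        _ ≤ x ^ (m + 1) ⊔ y ^ 0 := by rw [h]; exact le_sup_right
    | succ n ihn =>
      have hexp : (x ⊔ y) ^ (m + 1 + (n + 1)) = (x ⊔ y) * (x ⊔ y) ^ (m + 1 + n) := by
        have : m + 1 + (n + 1) = (m + 1 + n) + 1 := by omega
        rw [this, pow_succ']
      have hdist : (x ⊔ y) * (x ⊔ y) ^ (m + 1 + n)
          ≤ x * (x ⊔ y) ^ (m + 1 + n) ⊔ y * (x ⊔ y) ^ (m + 1 + n) := by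
        rw [mul_comm x, mul_comm y, mul_comm (x ⊔ y)]
        exact rl_mul_sup_le _ _ _
      have h1 : x * (x ⊔ y) ^ (m + 1 + n) ≤ x ^ (m + 1) ⊔ y ^ (n + 1) := by
        have he : m + 1 + n = m + (n + 1) := by omega
        have := rl_mul_le_mul (le_refl x) (he ▸ ih (n + 1))
        refine this.trans ((rl_mul_sup_le x _ _).trans (sup_le ?_ ?_))
        · rw [← pow_succ']; exact le_sup_left
        · exact le_trans (rl_mul_le_left_s8 x _) le_sup_right
      have h2 : y * (x ⊔ y) ^ (m + 1 + n) ≤ x ^ (m + 1) ⊔ y ^ (n + 1) := by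
        have := rl_mul_le_mul (le_refl y) ihn
        refine this.trans ((rl_mul_sup_le y _ _).trans (sup_le ?_ ?_))
        · exact le_trans (rl_mul_le_left_s8 y _) le_sup_left
        · rw [← pow_succ']; exact le_sup_right
      rw [hexp]
      exact hdist.trans (sup_le h1 h2)

lemma rl_top_mem {G : Set α} (hG : IsFilter G) : (⊤ : α) ∈ G := by
  obtain ⟨⟨g, hg⟩, _, hup⟩ := hG
  exact hup g hg ⊤ le_top

lemma rl_pow_mem {G : Set α} (hG : IsFilter G) {x : α} (hx : x ∈ G) (n : ℕ) : x ^ n ∈ G := by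
  induction n with
  | zero => rw [pow_zero, ResiduatedLattice.one_eq_top]; exact rl_top_mem hG
  | succ n ih => rw [pow_succ]; exact hG.2.1 _ ih _ hx

/-- The filter generated by a filter `G` together with an element `x`. -/
def filtExt (G : Set α) (x : α) : Set α := {y | ∃ g ∈ G, ∃ n : ℕ, g * x ^ n ≤ y}

lemma filtExt_isFilter {G : Set α} (hG : IsFilter G) (x : α) : IsFilter (filtExt G x) := by
  obtain ⟨⟨g0, hg0⟩, hmul, hup⟩ := hG
  refine ⟨⟨g0, g0, hg0, 0, by rw [pow_zero, mul_one]⟩, ?_, ?_⟩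
  · rintro a ⟨g1, hg1, n1, h1⟩ b ⟨g2, hg2, n2, h2⟩
    refine ⟨g1 * g2, hmul _ hg1 _ hg2, n1 + n2, ?_⟩
    calc g1 * g2 * x ^ (n1 + n2) = (g1 * x ^ n1) * (g2 * x ^ n2) := by
          rw [pow_add]; exact mul_mul_mul_comm g1 g2 (x ^ n1) (x ^ n2)
      _ ≤ a * b := rl_mul_le_mul h1 h2
  · rintro a ⟨g1, hg1, n1, h1⟩ b hab
    exact ⟨g1, hg1, n1, h1.trans hab⟩

lemma subset_filtExt (G : Set α) (x : α) : G ⊆ filtExt G x := fun g hg =>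
  ⟨g, hg, 0, by rw [pow_zero, mul_one]⟩

lemma mem_filtExt {G : Set α} (hG : G.Nonempty) (x : α) : x ∈ filtExt G x := by
  obtain ⟨g, hg⟩ := hG
  exact ⟨g, hg, 1, by rw [pow_one]; exact rl_mul_le_left_s8 g x⟩

/-- Prime filter separation: a filter disjoint from a join-closed set can be extended to a
prime filter still disjoint from it. -/
lemma rl_prime_sep {F C : Set α} (hF : IsFilter F) (hC : IsJoinClosed C)
    (hdis : ∀ c ∈ C, c ∉ F) :
    ∃ P : Set α, IsPrimeFilter P ∧ F ⊆ P ∧ ∀ c ∈ C, c ∉ P := by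
  set S : Set (Set α) := {G | IsFilter G ∧ F ⊆ G ∧ ∀ c ∈ C, c ∉ G} with hS
  have hFS : F ∈ S := ⟨hF, subset_rfl, hdis⟩
  have hchainCond : ∀ c ⊆ S, IsChain (· ⊆ ·) c → c.Nonempty →
      ∃ ub ∈ S, ∀ s ∈ c, s ⊆ ub := by
    intro c hcS hchain hcne
    refine ⟨⋃₀ c, ⟨?_, ?_, ?_⟩, fun s hs => Set.subset_sUnion_of_mem hs⟩
    · refine ⟨?_, ?_, ?_⟩
      · obtain ⟨G, hG⟩ := hcne
        obtain ⟨g, hg⟩ := (hcS hG).1.1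
        exact ⟨g, G, hG, hg⟩
      · rintro a ⟨G1, hG1, ha⟩ b ⟨G2, hG2, hb⟩
        rcases hchain.total hG1 hG2 with h | h
        · exact ⟨G2, hG2, (hcS hG2).1.2.1 a (h ha) b hb⟩
        · exact ⟨G1, hG1, (hcS hG1).1.2.1 a ha b (h hb)⟩
      · rintro a ⟨G1, hG1, ha⟩ b hab
        exact ⟨G1, hG1, (hcS hG1).1.2.2 a ha b hab⟩
    · obtain ⟨G, hG⟩ := hcne
      exact (hcS hG).2.1.trans (Set.subset_sUnion_of_mem hG)
    · rintro x hx ⟨G1, hG1, hxG⟩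
      exact (hcS hG1).2.2 x hx hxG
  obtain ⟨P, hFP, hPS, hPmax⟩ : ∃ P, F ⊆ P ∧ P ∈ S ∧ ∀ G ∈ S, P ⊆ G → G = P := by
    obtain ⟨P, hFP, hmax⟩ := zorn_subset_nonempty S hchainCond F hFS
    exact ⟨P, hFP, hmax.prop, fun G hG hPG => (hmax.eq_of_subset hG hPG).symm⟩
  obtain ⟨hPfilt, hFPsub, hPC⟩ := hPS
  refine ⟨P, ⟨hPfilt, ?_, ?_⟩, hFP, hPC⟩
  · obtain ⟨c0, hc0⟩ := hC.1
    intro h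
    exact hPC c0 hc0 (h ▸ Set.mem_univ c0)
  · intro x y hxy
    by_contra hcon
    push_neg at hcon
    obtain ⟨hxP, hyP⟩ := hcon
    -- filtExt P x meets C
    have hx : ∃ c1 ∈ C, c1 ∈ filtExt P x := by
      by_contra h
      push_neg at h
      have : filtExt P x ∈ S :=
        ⟨filtExt_isFilter hPfilt x, hFPsub.trans (subset_filtExt P x), h⟩
      have := hPmax _ this (subset_filtExt P x)
      exact hxP (this ▸ mem_filtExt hPfilt.1 x)
    have hy : ∃ c2 ∈ C, c2 ∈ filtExt P y := by
      by_contra h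
      push_neg at h
      have : filtExt P y ∈ S :=
        ⟨filtExt_isFilter hPfilt y, hFPsub.trans (subset_filtExt P y), h⟩
      have := hPmax _ this (subset_filtExt P y)
      exact hyP (this ▸ mem_filtExt hPfilt.1 y)
    obtain ⟨c1, hc1C, p1, hp1, n1, hle1⟩ := hx
    obtain ⟨c2, hc2C, p2, hp2, n2, hle2⟩ := hy
    have hcC : c1 ⊔ c2 ∈ C := hC.2 c1 hc1C c2 hc2C
    have hmemP : p1 * p2 * (x ⊔ y) ^ (n1 + n2) ∈ P :=
      hPfilt.2.1 _ (hPfilt.2.1 _ hp1 _ hp2) _ (rl_pow_mem hPfilt hxy _)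
    have hle : p1 * p2 * (x ⊔ y) ^ (n1 + n2) ≤ c1 ⊔ c2 := by
      have h1 : p1 * p2 * (x ⊔ y) ^ (n1 + n2) ≤ p1 * p2 * (x ^ n1 ⊔ y ^ n2) :=
        rl_mul_le_mul le_rfl (rl_pow_sup x y n1 n2)
      have h2 : p1 * p2 * (x ^ n1 ⊔ y ^ n2) ≤ p1 * p2 * x ^ n1 ⊔ p1 * p2 * y ^ n2 :=
        rl_mul_sup_le _ _ _
      have h3 : p1 * p2 * x ^ n1 ≤ c1 := by
        calc p1 * p2 * x ^ n1 = p2 * (p1 * x ^ n1) := by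
              rw [mul_comm p1 p2, mul_assoc]
          _ ≤ p1 * x ^ n1 := rl_mul_le_left_s8 _ _
          _ ≤ c1 := hle1
      have h4 : p1 * p2 * y ^ n2 ≤ c2 := by
        calc p1 * p2 * y ^ n2 = p1 * (p2 * y ^ n2) := by rw [mul_assoc]
          _ ≤ p2 * y ^ n2 := rl_mul_le_left_s8 _ _
          _ ≤ c2 := hle2
      exact h1.trans (h2.trans (sup_le (h3.trans le_sup_left) (h4.trans le_sup_right)))
    exact hPC _ hcC (hPfilt.2.2 _ hmemP _ hle)

end Helpers

/-- Proposition 3.13: for a proper filter `F` and an `F`-minimal prime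
filter `m`, `m = D_F(m)` and `m ⊆ D_F(F)`. -/
theorem stmt_8 (F m : Set α) (hF : IsFilter F) (hFp : F ≠ Set.univ)
    (hm : IsMinPrimeOver F m) :
    m = divisorsF F m ∧ m ⊆ divisorsF F F := by
  obtain ⟨⟨hmFilt, hmProper, hmPr⟩, hFm, hmin⟩ := hm
  have hDsub : divisorsF F m ⊆ m := by
    rintro a ⟨x, hxm, hxa⟩
    rcases hmPr x a (hFm hxa) with h | h
    · exact absurd h hxm
    · exact h
  have hsub : m ⊆ divisorsF F m := by
    intro a ham
    by_contra hna
    have hna' : ∀ x, x ∉ m → x ⊔ a ∉ F := by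
      intro x hx hxa
      exact hna ⟨x, hx, hxa⟩
    obtain ⟨x0, hx0⟩ : ∃ x0, x0 ∉ m := by
      by_contra h
      push_neg at h
      exact hmProper (Set.eq_univ_of_forall h)
    set C : Set α := {c | ∃ x, x ∉ m ∧ c = x ⊔ a} with hCdef
    have hCjc : IsJoinClosed C := by
      refine ⟨⟨x0 ⊔ a, x0, hx0, rfl⟩, ?_⟩
      rintro c1 ⟨u, hu, rfl⟩ c2 ⟨v, hv, rfl⟩
      refine ⟨u ⊔ v, fun h => ?_, ?_⟩
      · rcases hmPr u v h with h' | h'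
        · exact hu h'
        · exact hv h'
      · rw [sup_sup_sup_comm, sup_idem]
    have hCdis : ∀ c ∈ C, c ∉ F := by
      rintro c ⟨x, hx, rfl⟩
      exact hna' x hx
    obtain ⟨P, hPp, hFP, hPC⟩ := rl_prime_sep hF hCjc hCdis
    have hPm : P ⊆ m := by
      intro q hq
      by_contra hqm
      exact hPC (q ⊔ a) ⟨q, hqm, rfl⟩ (hPp.1.2.2 q hq _ le_sup_left)
    have haP : a ∉ P := fun haP =>
      hPC (x0 ⊔ a) ⟨x0, hx0, rfl⟩ (hPp.1.2.2 a haP _ le_sup_right)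
    have hPeq : P = m := hmin P hPp hFP hPm
    exact haP (hPeq ▸ ham)
  refine ⟨Set.Subset.antisymm hsub hDsub, ?_⟩
  intro a ha
  obtain ⟨x, hxm, hxa⟩ := hsub ha
  exact ⟨x, fun hxF => hxm (hFm hxF), hxa⟩
end
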